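/- If ←G is a totally disconnected metric compactification of a countable group G, then there exists a nested decreasing sequence (Γ_n)_{n∈ℕ} of finite index normal subgroups of G with ⋂_n Γ_n={1_G} such that the G-odometer associated to (Γ_n) is topologically conjugate, as a G-system, to ←G equipped with the action of G by left multiplication. Consequently, G is residually finite if and only if G admits a totally disconnected metric compactification. -/

import Mathlib

open Pointwise Filter Topology

/-- Each (finite) quotient `G ⧸ Γ` is given the discrete topology. -/
instance quotientDiscreteTopology {G : Type*} [Group G] (Γ : Subgroup G) :
    TopologicalSpace (G ⧸ Γ) := ⊥

/-- The `G`-odometer associated to a nested decreasing sequence `(Γ n)` of subgroups of `G`: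
the inverse limit of the canonical projections `G ⧸ Γ (n+1) → G ⧸ Γ n`, realized as the set of
compatible sequences in `Π n, G ⧸ Γ n`. `G` acts on it by coordinatewise left multiplication. -/
def GOdometer {G : Type*} [Group G] (Γ : ℕ → Subgroup G) : Set (Π n, G ⧸ Γ n) :=
  {y | ∀ (n : ℕ) (g : G), y (n + 1) = (g : G ⧸ Γ (n + 1)) → y n = (g : G ⧸ Γ n)}

/-- A totally disconnected metric compactification of a countable group `G`: a totally
disconnected compact metrizable topological group together with an injective group homomorphism
from `G` with dense image. -/
structure TDMCompactification (G : Type*) [Group G] where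
  space : Type*
  [grp : Group space]
  [top : TopologicalSpace space]
  [tgrp : IsTopologicalGroup space]
  [cpt : CompactSpace space]
  [metr : TopologicalSpace.MetrizableSpace space]
  [td : TotallyDisconnectedSpace space]
  emb : G →* space
  inj : Function.Injective emb
  dens : DenseRange emb

section Main

variable {G : Type*} [Group G]

instance (Γ : Subgroup G) : DiscreteTopology (G ⧸ Γ) := ⟨rfl⟩

theorem odometer_main (H : Type*) [Group H] [TopologicalSpace H] [IsTopologicalGroup H]
    [CompactSpace H] [TopologicalSpace.MetrizableSpace H] [TotallyDisconnectedSpace H]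
    (i : G →* H) (hinj : Function.Injective i) (hdense : DenseRange i) :
    ∃ Γ : ℕ → Subgroup G,
      Antitone Γ ∧ (∀ n, (Γ n).Normal) ∧ (∀ n, (Γ n).FiniteIndex) ∧ (⨅ n, Γ n) = ⊥ ∧
      ∃ e : GOdometer Γ ≃ₜ H,
        ∀ (g : G) (y z : GOdometer Γ),
          (∀ n, (z : Π n, G ⧸ Γ n) n = g • (y : Π n, G ⧸ Γ n) n) → e z = i g * e y := by
  -- a countable antitone basis of neighborhoods of 1 in H
  obtain ⟨B, hB⟩ := (𝓝 (1 : H)).exists_antitone_basis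
  -- open normal subgroups inside each basis element
  have hW : ∀ n, ∃ W : OpenNormalSubgroup H, (W : Set H) ⊆ B n := by
    intro n
    have hBn : B n ∈ 𝓝 (1 : H) := hB.mem n
    obtain ⟨V, hV, h1V, hVB⟩ :=
      compact_exists_isClopen_in_isOpen isOpen_interior (mem_interior_iff_mem_nhds.2 hBn)
    obtain ⟨W, hWV⟩ := IsTopologicalGroup.exist_openNormalSubgroup_sub_clopen_nhds_of_one hV h1V
    exact ⟨W, hWV.trans (hVB.trans interior_subset)⟩
  choose W hWB using hW
  -- the decreasing chain U n = W 0 ⊓ ... ⊓ W n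
  set U : ℕ → OpenNormalSubgroup H := fun n => Nat.rec (W 0) (fun n Un => Un ⊓ W (n + 1)) n
    with hUdef
  have hUle : ∀ n, (U (n + 1)).toSubgroup ≤ (U n).toSubgroup := fun n => inf_le_left
  have hUW : ∀ n, (U n).toSubgroup ≤ (W n).toSubgroup := by
    intro n; cases n with
    | zero => exact le_rfl
    | succ n => exact inf_le_right
  have hUanti : Antitone fun n => (U n).toSubgroup := antitone_nat_of_succ_le hUle
  haveI hUN : ∀ n, ((U n).toSubgroup).Normal := fun n => (U n).isNormal'
  have hUopen : ∀ n, IsOpen ((U n).toSubgroup : Set H) := fun n => (U n).toOpenSubgroup.isOpen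
  -- the key separation fact
  have key : ∀ x : H, (∀ n, x ∈ (U n).toSubgroup) → x = 1 := by
    intro x hx
    by_contra hne
    have h1 : {x}ᶜ ∈ 𝓝 (1 : H) :=
      (isOpen_compl_singleton).mem_nhds (by simpa using (Ne.symm hne))
    obtain ⟨n, -, hsub⟩ := hB.toHasBasis.mem_iff.1 h1
    exact hsub (hWB n (hUW n (hx n))) rfl
  -- the chain in G
  set Γ : ℕ → Subgroup G := fun n => ((U n).toSubgroup).comap i with hΓdef
  haveI hΓN : ∀ n, (Γ n).Normal := fun n => (U n).isNormal'.comap i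
  -- the quotient maps
  set α : ∀ n, G ⧸ Γ n →* H ⧸ (U n).toSubgroup :=
    fun n => QuotientGroup.map (Γ n) ((U n).toSubgroup) i le_rfl with hαdef
  have hαmk : ∀ (n : ℕ) (g : G), α n (g : G ⧸ Γ n) = ((i g : H) : H ⧸ (U n).toSubgroup) :=
    fun n g => rfl
  have hαinj : ∀ n, Function.Injective (α n) := by
    intro n x y h
    induction x using QuotientGroup.induction_on with | H a =>
    induction y using QuotientGroup.induction_on with | H b =>
    rw [hαmk, hαmk, QuotientGroup.eq] at h
    rw [QuotientGroup.eq]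
    simpa [hΓdef, Subgroup.mem_comap] using h
  have hαsurj : ∀ n, Function.Surjective (α n) := by
    intro n x
    induction x using QuotientGroup.induction_on with | H h =>
    have hopen : IsOpen ((fun x => h * x) '' ((U n).toSubgroup : Set H)) :=
      (isOpenMap_mul_left h) _ (hUopen n)
    have hne : ((fun x => h * x) '' ((U n).toSubgroup : Set H)).Nonempty :=
      ⟨h, 1, (U n).toSubgroup.one_mem, mul_one h⟩
    obtain ⟨g, u, hu, hgu⟩ := hdense.exists_mem_open hopen hne
    refine ⟨(g : G ⧸ Γ n), ?_⟩
    rw [hαmk, eq_comm, QuotientGroup.eq]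
    have : h⁻¹ * i g = u := by rw [← hgu]; group
    rw [this]; exact hu
  -- finiteness
  haveI hfinH : ∀ n, Finite (H ⧸ (U n).toSubgroup) :=
    fun n => Subgroup.quotient_finite_of_isOpen _ (hUopen n)
  haveI hfinG : ∀ n, Finite (G ⧸ Γ n) := fun n => Finite.of_injective _ (hαinj n)
  -- the equivs
  set j : ∀ n, (G ⧸ Γ n) ≃ (H ⧸ (U n).toSubgroup) :=
    fun n => Equiv.ofBijective (α n) ⟨hαinj n, hαsurj n⟩ with hjdef
  set φ : ∀ n, H → G ⧸ Γ n := fun n h => (j n).symm ((h : H ⧸ (U n).toSubgroup)) with hφdef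
  have hφ : ∀ (n : ℕ) (h : H) (g : G),
      φ n h = (g : G ⧸ Γ n) ↔ ((h : H ⧸ (U n).toSubgroup) = ((i g : H) : H ⧸ (U n).toSubgroup)) := by
    intro n h g
    rw [hφdef]
    simp only [Equiv.symm_apply_eq, hjdef, Equiv.ofBijective_apply, hαmk]
    exact Iff.rfl
  -- the map from H to the odometer
  have hmem : ∀ h : H, (fun n => φ n h) ∈ GOdometer Γ := by
    intro h n g hg
    have hg' : φ (n + 1) h = (g : G ⧸ Γ (n + 1)) := hg
    exact (hφ n h g).2 (QuotientGroup.eq.2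
      (hUle n (QuotientGroup.eq.1 ((hφ (n + 1) h g).1 hg'))))
  set F0 : H → GOdometer Γ := fun h => ⟨fun n => φ n h, hmem h⟩ with hF0def
  have hφcont : ∀ n, Continuous (φ n) := by
    intro n
    rw [continuous_discrete_rng]
    intro x
    induction x using QuotientGroup.induction_on with | H g =>
    have hset : φ n ⁻¹' {(g : G ⧸ Γ n)} = (fun x => i g * x) '' ((U n).toSubgroup : Set H) := by
      ext h
      simp only [Set.mem_preimage, Set.mem_singleton_iff, Set.mem_image]
      rw [hφ, QuotientGroup.eq]
      constructor
      · intro hu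
        refine ⟨(h⁻¹ * i g)⁻¹, (U n).toSubgroup.inv_mem hu, ?_⟩
        group
      · rintro ⟨u, hu, rfl⟩
        have : (i g * u)⁻¹ * i g = u⁻¹ := by group
        rw [this]; exact (U n).toSubgroup.inv_mem hu
    rw [hset]
    exact (isOpenMap_mul_left (i g)) _ (hUopen n)
  have hF0cont : Continuous F0 :=
    Continuous.subtype_mk (continuous_pi fun n => hφcont n) _
  have hF0inj : Function.Injective F0 := by
    intro h h' hh
    have hco : ∀ n, φ n h = φ n h' := fun n => congrFun (congrArg Subtype.val hh) n
    have : ∀ n, h⁻¹ * h' ∈ (U n).toSubgroup := by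
      intro n
      obtain ⟨g, hg⟩ := QuotientGroup.mk_surjective (φ n h)
      have h1 := (hφ n h g).1 hg.symm
      have h2 := (hφ n h' g).1 ((hco n) ▸ hg.symm)
      exact QuotientGroup.eq.1 (h1.trans h2.symm)
    have h1 : h⁻¹ * h' = 1 := key _ this
    rwa [inv_mul_eq_one] at h1
  have hF0surj : Function.Surjective F0 := by
    intro y
    choose g hg using fun n => QuotientGroup.mk_surjective ((y : Π n, G ⧸ Γ n) n)
    set C : ℕ → Set H := fun n => (fun x => i (g n) * x) '' ((U n).toSubgroup : Set H)
      with hCdef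
    have hCclosed : ∀ n, IsClosed (C n) :=
      fun n => (Homeomorph.mulLeft (i (g n))).isClosedMap _ (U n).toOpenSubgroup.isClosed
    have hCne : ∀ n, (C n).Nonempty := fun n => ⟨i (g n), 1, (U n).toSubgroup.one_mem, mul_one _⟩
    have hCsub : ∀ n, C (n + 1) ⊆ C n := by
      intro n x hx
      obtain ⟨u, hu, rfl⟩ := hx
      have hyn : (y : Π n, G ⧸ Γ n) n = (g (n + 1) : G ⧸ Γ n) := y.2 n (g (n + 1)) (hg (n + 1)).symm
      have hrel : (g n)⁻¹ * g (n + 1) ∈ Γ n := by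
        rw [← QuotientGroup.eq]
        exact (hg n).trans hyn
      have hrel' : (i (g n))⁻¹ * i (g (n + 1)) ∈ (U n).toSubgroup := by
        have := hrel
        simpa [hΓdef, Subgroup.mem_comap] using this
      refine ⟨(i (g n))⁻¹ * i (g (n + 1)) * u, ?_, by group⟩
      exact (U n).toSubgroup.mul_mem hrel' (hUle n hu)
    obtain ⟨h, hh⟩ := IsCompact.nonempty_iInter_of_sequence_nonempty_isCompact_isClosed C
      hCsub hCne ((hCclosed 0).isCompact) hCclosed
    refine ⟨h, ?_⟩
    apply Subtype.ext
    funext n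
    have hhn : h ∈ C n := Set.mem_iInter.1 hh n
    obtain ⟨u, hu, hequ⟩ := hhn
    show φ n h = _
    refine ((hφ n h (g n)).2 (QuotientGroup.eq.2 ?_)).trans (hg n)
    have : h⁻¹ * i (g n) = u⁻¹ := by rw [← hequ]; group
    rw [this]; exact (U n).toSubgroup.inv_mem hu
  -- the homeomorphism
  set F : H ≃ₜ GOdometer Γ :=
    (Continuous.homeoOfEquivCompactToT2 (f := Equiv.ofBijective F0 ⟨hF0inj, hF0surj⟩) hF0cont)
    with hFdef
  refine ⟨Γ, ?_, hΓN, ?_, ?_, F.symm, ?_⟩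
  · exact fun m n hmn => Subgroup.comap_mono (hUanti hmn)
  · exact fun n => Subgroup.finiteIndex_of_finite_quotient
  · rw [eq_bot_iff]
    intro g hg
    simp only [Subgroup.mem_iInf, hΓdef, Subgroup.mem_comap] at hg
    have : i g = 1 := key _ hg
    have : g = 1 := hinj (by simpa using this)
    simp [this]
  · intro g y z hz
    set h : H := F.symm y with hhdef
    have hFh : F h = y := F.apply_symm_apply y
    have hcoord : ∀ n, φ n h = (y : Π n, G ⧸ Γ n) n := by
      intro n
      have : ((F h : GOdometer Γ) : Π n, G ⧸ Γ n) n = (y : Π n, G ⧸ Γ n) n := by rw [hFh]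
      exact this
    have main : F (i g * h) = z := by
      apply Subtype.ext
      funext n
      obtain ⟨a, ha⟩ := QuotientGroup.mk_surjective ((y : Π n, G ⧸ Γ n) n)
      have hφh : φ n h = (a : G ⧸ Γ n) := (hcoord n).trans ha.symm
      have h1 : (h : H ⧸ (U n).toSubgroup) = ((i a : H) : H ⧸ (U n).toSubgroup) :=
        (hφ n h a).1 hφh
      show φ n (i g * h) = _
      have h2 : φ n (i g * h) = ((g * a : G) : G ⧸ Γ n) := by
        refine (hφ n (i g * h) (g * a)).2 (QuotientGroup.eq.2 ?_)
        have hU : h⁻¹ * i a ∈ (U n).toSubgroup := QuotientGroup.eq.1 h1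
        have : (i g * h)⁻¹ * i (g * a) = h⁻¹ * i a := by rw [map_mul]; group
        rw [this]; exact hU
      have h6 : ((g * a : G) : G ⧸ Γ n) = g • ((a : G ⧸ Γ n)) := rfl
      exact h2.trans (h6.trans ((congrArg (fun q => g • q) ha).trans (hz n).symm))
    rw [← main, Homeomorph.symm_apply_apply]

universe u v

theorem compactification_of_chain {G : Type u} [Group G] (Γ : ℕ → Subgroup G)
    (hfi : ∀ n, (Γ n).FiniteIndex) (hbot : (⨅ n, Γ n) = ⊥) :
    Nonempty (TDMCompactification.{u, v} G) := by
  set N : ℕ → Subgroup G := fun n => (Γ n).normalCore with hNdef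
  haveI hNN : ∀ n, (N n).Normal := fun n => Subgroup.normalCore_normal (Γ n)
  haveI hNfi : ∀ n, (N n).FiniteIndex := fun n =>
    @Subgroup.finiteIndex_normalCore _ _ (Γ n) (hfi n)
  haveI hfin : ∀ n, Finite (G ⧸ N n) := fun n => Subgroup.finite_quotient_of_finiteIndex
  haveI hdisc : ∀ n, DiscreteTopology (G ⧸ N n) := fun n => ⟨rfl⟩
  haveI htg : ∀ n, IsTopologicalGroup (G ⧸ N n) := fun n =>
    { continuous_mul := continuous_of_discreteTopology
      continuous_inv := continuous_of_discreteTopology }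
  -- the diagonal homomorphism
  set φ : G →* (Π n, G ⧸ N n) :=
    MonoidHom.mk' (fun g n => (g : G ⧸ N n)) (fun a b => rfl) with hφdef
  have hφinj : Function.Injective φ := by
    intro a b hab
    have h1 : ∀ n, a⁻¹ * b ∈ N n := by
      intro n
      have : (a : G ⧸ N n) = (b : G ⧸ N n) := congrFun hab n
      exact QuotientGroup.eq.1 this
    have h2 : a⁻¹ * b ∈ (⨅ n, Γ n) :=
      Subgroup.mem_iInf.2 fun n => Subgroup.normalCore_le _ (h1 n)
    rw [hbot, Subgroup.mem_bot, inv_mul_eq_one] at h2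
    exact h2
  set S : Subgroup (Π n, G ⧸ N n) := φ.range.topologicalClosure with hSdef
  have hmemS : ∀ g, φ g ∈ S := fun g => Subgroup.le_topologicalClosure _ ⟨g, rfl⟩
  set emb : G →* S := φ.codRestrict S hmemS with hembdef
  haveI : SecondCountableTopology (Π n, G ⧸ N n) := inferInstance
  haveI : T3Space (Π n, G ⧸ N n) := inferInstance
  haveI : TopologicalSpace.MetrizableSpace (Π n, G ⧸ N n) :=
    TopologicalSpace.metrizableSpace_of_t3_secondCountable _
  haveI : TopologicalSpace.MetrizableSpace ↥S :=
    Topology.IsEmbedding.subtypeVal.metrizableSpace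
  haveI : CompactSpace S := isCompact_iff_compactSpace.1
    ((Subgroup.isClosed_topologicalClosure _).isCompact)
  have hembinj : Function.Injective emb := fun a b hab =>
    hφinj (congrArg Subtype.val hab)
  have hembdens : DenseRange emb := by
    intro x
    rw [closure_subtype]
    have himg : (Subtype.val '' Set.range emb) = Set.range φ := by
      ext u
      constructor
      · rintro ⟨-, ⟨g, rfl⟩, rfl⟩; exact ⟨g, rfl⟩
      · rintro ⟨g, rfl⟩; exact ⟨emb g, ⟨g, rfl⟩, rfl⟩
    rw [himg]
    have hx := x.2
    simpa [hSdef, Subgroup.topologicalClosure, MonoidHom.coe_range] using hx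
  -- shrink to the right universe
  haveI : ∀ n, Small.{v} (G ⧸ N n) := fun n => inferInstance
  haveI : Small.{v} (↥S) := inferInstance
  letI : TopologicalSpace (Shrink.{v} ↥S) :=
    TopologicalSpace.induced ((equivShrink ↥S).symm) inferInstance
  have hind : IsInducing ((equivShrink ↥S).symm : Shrink.{v} ↥S → ↥S) := ⟨rfl⟩
  set F : Shrink.{v} ↥S ≃ₜ ↥S := ((equivShrink ↥S).symm).toHomeomorphOfIsInducing hind
    with hFdef
  set μ : Shrink.{v} ↥S ≃* ↥S := Shrink.mulEquiv with hμdef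
  have hμF : ∀ x : Shrink.{v} ↥S, μ x = F x := fun x => rfl
  have keymul : ∀ p : Shrink.{v} ↥S × Shrink.{v} ↥S,
      p.1 * p.2 = F.symm (F p.1 * F p.2) := by
    intro p
    have h1 : F p.1 * F p.2 = F (p.1 * p.2) := by
      rw [← hμF, ← hμF, ← hμF, map_mul]
    rw [h1, Homeomorph.symm_apply_apply]
  have keyinv : ∀ x : Shrink.{v} ↥S, x⁻¹ = F.symm ((F x)⁻¹) := by
    intro x
    have h1 : (F x)⁻¹ = F x⁻¹ := by
      rw [← hμF, ← hμF, map_inv]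
    rw [h1, Homeomorph.symm_apply_apply]
  haveI : IsTopologicalGroup (Shrink.{v} ↥S) :=
    { continuous_mul := by
        have : (fun p : Shrink.{v} ↥S × Shrink.{v} ↥S => p.1 * p.2)
            = fun p => F.symm (F p.1 * F p.2) := funext keymul
        rw [this]
        exact F.symm.continuous.comp
          ((F.continuous.comp continuous_fst).mul (F.continuous.comp continuous_snd))
      continuous_inv := by
        have : (fun x : Shrink.{v} ↥S => x⁻¹) = fun x => F.symm ((F x)⁻¹) := funext keyinv
        rw [this]
        exact F.symm.continuous.comp (F.continuous.inv) }
  haveI : CompactSpace (Shrink.{v} ↥S) := F.symm.compactSpace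
  haveI : TopologicalSpace.MetrizableSpace (Shrink.{v} ↥S) :=
    F.isEmbedding.metrizableSpace
  haveI : TotallyDisconnectedSpace (Shrink.{v} ↥S) :=
    (F.isEmbedding.isTotallyDisconnected_range).1
      (isTotallyDisconnected_of_totallyDisconnectedSpace _)
  refine ⟨⟨Shrink.{v} ↥S, μ.symm.toMonoidHom.comp emb, ?_, ?_⟩⟩
  · exact μ.symm.injective.comp hembinj
  · have h1 : DenseRange (⇑F.symm ∘ ⇑emb) :=
      DenseRange.comp F.symm.surjective.denseRange hembdens F.symm.continuous
    exact h1

end Main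

/-- If `H = ←G` is a totally disconnected metric compactification of a
countable group `G`, then there exists a nested decreasing sequence `(Γ n)` of finite index
normal subgroups of `G` with trivial intersection such that the `G`-odometer associated to
`(Γ n)` is topologically conjugate, as a `G`-system, to `H` equipped with the action of `G` by
left multiplication. Consequently, `G` is residually finite if and only if `G` admits a totally
disconnected metric compactification. -/
theorem statement3 {G : Type*} [Group G] [Countable G]
    (H : Type*) [Group H] [TopologicalSpace H] [IsTopologicalGroup H] [CompactSpace H]
    [TopologicalSpace.MetrizableSpace H] [TotallyDisconnectedSpace H]
    (i : G →* H) (hinj : Function.Injective i) (hdense : DenseRange i) :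
    (∃ Γ : ℕ → Subgroup G,
      Antitone Γ ∧ (∀ n, (Γ n).Normal) ∧ (∀ n, (Γ n).FiniteIndex) ∧ (⨅ n, Γ n) = ⊥ ∧
      -- a `G`-equivariant homeomorphism between the odometer and `H`
      ∃ e : GOdometer Γ ≃ₜ H,
        ∀ (g : G) (y z : GOdometer Γ),
          (∀ n, (z : Π n, G ⧸ Γ n) n = g • (y : Π n, G ⧸ Γ n) n) → e z = i g * e y) ∧
    -- consequently: residual finiteness is equivalent to admitting such a compactification
    ((∃ Γ : ℕ → Subgroup G, Antitone Γ ∧ (∀ n, (Γ n).FiniteIndex) ∧ (⨅ n, Γ n) = ⊥) ↔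
      Nonempty (TDMCompactification G)) := by
  refine ⟨odometer_main H i hinj hdense, ?_, ?_⟩
  · rintro ⟨Γ, -, hfi, hbot⟩
    exact compactification_of_chain Γ hfi hbot
  · rintro ⟨c⟩
    letI := c.grp; letI := c.top; letI := c.tgrp
    letI := c.cpt; letI := c.metr; letI := c.td
    obtain ⟨Γ, hanti, -, hfi, hbot, -⟩ := odometer_main c.space c.emb c.inj c.dens
    exact ⟨Γ, hanti, hfi, hbot⟩
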